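/- Let Γ = BiCay(H,R,L,S) be a connected half-arc-transitive bi-Cayley graph over a finite abelian group H. Then R ∪ L is non-empty and contains no involution, |R| = |L| is even, |S| > 2, and the valency |R| + |S| of Γ is at least 6. -/

import Mathlib

open SimpleGraph

/-- The bi-Cayley graph `BiCay(H,R,L,S)` on vertex set `H × Bool`,
where `(h, false)` plays the role of `h₀` and `(h, true)` of `h₁`. -/
def biCay (H : Type*) [Group H] (R L S : Set H) : SimpleGraph (H × Bool) where
  Adj a b := a ≠ b ∧
    ((a.2 = false ∧ b.2 = false ∧ b.1 * a.1⁻¹ ∈ R ∧ a.1 * b.1⁻¹ ∈ R) ∨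
     (a.2 = true ∧ b.2 = true ∧ b.1 * a.1⁻¹ ∈ L ∧ a.1 * b.1⁻¹ ∈ L) ∨
     (a.2 = false ∧ b.2 = true ∧ b.1 * a.1⁻¹ ∈ S) ∨
     (a.2 = true ∧ b.2 = false ∧ a.1 * b.1⁻¹ ∈ S))
  symm := ⟨by rintro a b ⟨hne, h⟩; exact ⟨hne.symm, by tauto⟩⟩
  loopless := ⟨by rintro a ⟨hne, _⟩; exact hne rfl⟩

/-- Right multiplication by `g⁻¹` as an automorphism of the bi-Cayley graph;
the range of this homomorphism is the group `R(H)` of all right translations. -/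
def biCayRightMul (H : Type*) [Group H] (R L S : Set H) :
    H →* (biCay H R L S ≃g biCay H R L S) where
  toFun g :=
    { toEquiv := Equiv.prodCongr (Equiv.mulRight g⁻¹) (Equiv.refl Bool)
      map_rel_iff' := by
        intro a b
        simp only [biCay, Equiv.prodCongr_apply, Equiv.coe_mulRight, Equiv.refl_apply,
          Prod.map, ne_eq, Prod.mk.injEq, Prod.ext_iff]
        constructor
        · rintro ⟨hne, h⟩
          refine ⟨by rintro ⟨h1, h2⟩; exact hne ⟨by rw [h1], h2⟩, ?_⟩
          simpa [mul_assoc] using h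
        · rintro ⟨hne, h⟩
          refine ⟨by rintro ⟨h1, h2⟩; exact hne ⟨mul_right_cancel h1, h2⟩, ?_⟩
          simpa [mul_assoc] using h }
  map_one' := by
    apply RelIso.ext; intro x; simp
  map_mul' g₁ g₂ := by
    apply RelIso.ext; intro x
    simp [RelIso.mul_apply, Prod.map, mul_assoc]

/-- The subgroup `R(H)` of right translations inside `Aut(BiCay(H,R,L,S))`. -/
def biCayRH (H : Type*) [Group H] (R L S : Set H) :
    Subgroup (biCay H R L S ≃g biCay H R L S) :=
  (biCayRightMul H R L S).range


section Aux

open SimpleGraph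

variable {V : Type*} {G : SimpleGraph V}

/-- Build a graph automorphism from an involutive adjacency-preserving map. -/
private def autOfInvolutive (f : V → V) (hf : Function.Involutive f)
    (h : ∀ a b, G.Adj a b → G.Adj (f a) (f b)) : G ≃g G where
  toEquiv := Function.Involutive.toPerm f hf
  map_rel_iff' := by
    intro a b
    constructor
    · intro hab
      have h2 := h _ _ hab
      simpa [hf a, hf b] using h2
    · exact h a b

private lemma autOfInvolutive_apply (f : V → V) (hf : Function.Involutive f)
    (h : ∀ a b, G.Adj a b → G.Adj (f a) (f b)) (v : V) :
    autOfInvolutive f hf h v = f v := rfl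

/-- Edge-transitivity plus one reversible arc yields arc-transitivity. -/
private lemma arcTrans_of_reversal
    (hET : ∀ e₁ ∈ G.edgeSet, ∀ e₂ ∈ G.edgeSet,
      ∃ φ : G ≃g G, Sym2.map ⇑φ e₁ = e₂)
    {u v : V} (φ : G ≃g G) (huv : G.Adj u v) (h1 : φ u = v) (h2 : φ v = u) :
    ∀ a₁ b₁ a₂ b₂ : V, G.Adj a₁ b₁ → G.Adj a₂ b₂ →
      ∃ ψ : G ≃g G, ψ a₁ = a₂ ∧ ψ b₁ = b₂ := by
  intro a₁ b₁ a₂ b₂ hab₁ hab₂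
  obtain ⟨χ, hχ⟩ := hET s(a₁, b₁) (G.mem_edgeSet.2 hab₁) s(u, v) (G.mem_edgeSet.2 huv)
  obtain ⟨θ, hθ⟩ := hET s(u, v) (G.mem_edgeSet.2 huv) s(a₂, b₂) (G.mem_edgeSet.2 hab₂)
  rw [Sym2.map_pair_eq, Sym2.eq_iff] at hχ hθ
  rcases hχ with ⟨hc1, hc2⟩ | ⟨hc1, hc2⟩
  · rcases hθ with ⟨ht1, ht2⟩ | ⟨ht1, ht2⟩
    · exact ⟨χ.trans θ, by simp [RelIso.trans_apply, hc1, hc2, ht1, ht2]⟩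
    · exact ⟨(χ.trans φ).trans θ,
        by simp [RelIso.trans_apply, hc1, hc2, h1, h2, ht1, ht2]⟩
  · rcases hθ with ⟨ht1, ht2⟩ | ⟨ht1, ht2⟩
    · exact ⟨(χ.trans φ).trans θ,
        by simp [RelIso.trans_apply, hc1, hc2, h1, h2, ht1, ht2]⟩
    · exact ⟨χ.trans θ, by simp [RelIso.trans_apply, hc1, hc2, ht1, ht2]⟩

/-- A vertex- and edge- but not arc-transitive finite graph has even degree. -/
private lemma even_degree_of_halfArcTrans [Finite V]
    (hVT : ∀ v w : V, ∃ φ : G ≃g G, φ v = w)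
    (hET : ∀ e₁ ∈ G.edgeSet, ∀ e₂ ∈ G.edgeSet,
      ∃ φ : G ≃g G, Sym2.map ⇑φ e₁ = e₂)
    (hnAT : ¬ (∀ a₁ b₁ a₂ b₂ : V, G.Adj a₁ b₁ → G.Adj a₂ b₂ →
      ∃ φ : G ≃g G, φ a₁ = a₂ ∧ φ b₁ = b₂))
    {v₀ w₀ : V} (h0 : G.Adj v₀ w₀) :
    Even (Nat.card (G.neighborSet v₀)) := by
  classical
  haveI : Fintype V := Fintype.ofFinite V
  set O : V → V → Prop := fun a b => ∃ φ : G ≃g G, φ v₀ = a ∧ φ w₀ = b with hO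
  have adjO : ∀ {a b}, O a b → G.Adj a b := by
    rintro a b ⟨φ, rfl, rfl⟩
    exact φ.map_adj_iff.2 h0
  have cover : ∀ {a b}, G.Adj a b → O a b ∨ O b a := by
    intro a b hab
    obtain ⟨φ, hφ⟩ := hET s(v₀, w₀) (G.mem_edgeSet.2 h0) s(a, b) (G.mem_edgeSet.2 hab)
    rw [Sym2.map_pair_eq, Sym2.eq_iff] at hφ
    rcases hφ with ⟨h1, h2⟩ | ⟨h1, h2⟩
    · exact Or.inl ⟨φ, h1, h2⟩
    · exact Or.inr ⟨φ, h1, h2⟩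
  have excl : ∀ {a b}, O a b → O b a → False := by
    rintro a b ⟨φ, rfl, rfl⟩ ⟨ψ, h1, h2⟩
    refine hnAT (arcTrans_of_reversal hET (φ.symm.trans ψ) (φ.map_adj_iff.2 h0) ?_ ?_) <;>
      simp [RelIso.trans_apply, h1, h2]
  have inv : ∀ (ρ : G ≃g G) {a b}, O a b → O (ρ a) (ρ b) := by
    rintro ρ a b ⟨φ, rfl, rfl⟩
    exact ⟨φ.trans ρ, rfl, rfl⟩
  set Out : V → Finset V := fun v => Finset.univ.filter (fun w => O v w) with hOut
  set Inn : V → Finset V := fun v => Finset.univ.filter (fun w => O w v) with hInn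
  -- constancy of out- and in-degrees
  have cardOut : ∀ v : V, (Out v).card = (Out v₀).card := by
    intro v
    obtain ⟨ρ, hρ⟩ := hVT v₀ v
    apply Finset.card_bij (fun w _ => ρ.symm w)
    · intro w hw
      simp only [hOut, Finset.mem_filter, Finset.mem_univ, true_and] at hw ⊢
      have := inv ρ.symm hw
      simpa [← hρ] using this
    · intro w₁ _ w₂ _ h
      exact ρ.symm.injective h
    · intro w hw
      refine ⟨ρ w, ?_, by simp⟩
      simp only [hOut, Finset.mem_filter, Finset.mem_univ, true_and] at hw ⊢
      have := inv ρ hw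
      simpa [hρ] using this
  have cardInn : ∀ v : V, (Inn v).card = (Inn v₀).card := by
    intro v
    obtain ⟨ρ, hρ⟩ := hVT v₀ v
    apply Finset.card_bij (fun w _ => ρ.symm w)
    · intro w hw
      simp only [hInn, Finset.mem_filter, Finset.mem_univ, true_and] at hw ⊢
      have := inv ρ.symm hw
      simpa [← hρ] using this
    · intro w₁ _ w₂ _ h
      exact ρ.symm.injective h
    · intro w hw
      refine ⟨ρ w, ?_, by simp⟩
      simp only [hInn, Finset.mem_filter, Finset.mem_univ, true_and] at hw ⊢
      have := inv ρ hw
      simpa [hρ] using this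
  -- double counting
  set T : Finset (V × V) := Finset.univ.filter (fun p => O p.1 p.2) with hT
  have sumOut : T.card = ∑ v : V, (Out v).card := by
    rw [Finset.card_eq_sum_card_fiberwise (f := Prod.fst) (t := Finset.univ)
      (fun x _ => Finset.mem_univ _)]
    refine Finset.sum_congr rfl fun v _ => ?_
    apply Finset.card_bij (fun p _ => p.2)
    · rintro ⟨a, b⟩ hp
      simp only [hT, Finset.mem_filter, Finset.mem_univ, true_and] at hp
      obtain ⟨h1, rfl⟩ := hp
      simpa [hOut] using h1
    · rintro ⟨a₁, b₁⟩ h₁ ⟨a₂, b₂⟩ h₂ h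
      simp only [hT, Finset.mem_filter, Finset.mem_univ, true_and] at h₁ h₂
      cases h₁.2; cases h₂.2; cases h; rfl
    · intro w hw
      simp only [hOut, Finset.mem_filter, Finset.mem_univ, true_and] at hw
      exact ⟨(v, w), by simp [hT, hw], rfl⟩
  have sumInn : T.card = ∑ v : V, (Inn v).card := by
    rw [Finset.card_eq_sum_card_fiberwise (f := Prod.snd) (t := Finset.univ)
      (fun x _ => Finset.mem_univ _)]
    refine Finset.sum_congr rfl fun v _ => ?_
    apply Finset.card_bij (fun p _ => p.1)
    · rintro ⟨a, b⟩ hp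
      simp only [hT, Finset.mem_filter, Finset.mem_univ, true_and] at hp
      obtain ⟨h1, rfl⟩ := hp
      simpa [hInn] using h1
    · rintro ⟨a₁, b₁⟩ h₁ ⟨a₂, b₂⟩ h₂ h
      simp only [hT, Finset.mem_filter, Finset.mem_univ, true_and] at h₁ h₂
      cases h₁.2; cases h₂.2; cases h; rfl
    · intro w hw
      simp only [hInn, Finset.mem_filter, Finset.mem_univ, true_and] at hw
      exact ⟨(w, v), by simp [hT, hw], rfl⟩
  have hab : (Out v₀).card = (Inn v₀).card := by
    have h1 : (Fintype.card V) * (Out v₀).card = (Fintype.card V) * (Inn v₀).card := by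
      have e1 : ∑ v : V, (Out v).card = (Fintype.card V) * (Out v₀).card := by
        rw [Finset.sum_congr rfl (fun v _ => cardOut v), Finset.sum_const,
          Finset.card_univ, smul_eq_mul]
      have e2 : ∑ v : V, (Inn v).card = (Fintype.card V) * (Inn v₀).card := by
        rw [Finset.sum_congr rfl (fun v _ => cardInn v), Finset.sum_const,
          Finset.card_univ, smul_eq_mul]
      rw [← e1, ← e2, ← sumOut, ← sumInn]
    have hpos : 0 < Fintype.card V := Fintype.card_pos_iff.2 ⟨v₀⟩
    exact Nat.eq_of_mul_eq_mul_left hpos h1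
  -- the neighbourhood is the disjoint union of Out v₀ and Inn v₀
  have hsplit : G.neighborSet v₀ = ↑(Out v₀ ∪ Inn v₀) := by
    ext w
    simp only [SimpleGraph.mem_neighborSet, Finset.coe_union, Set.mem_union,
      Finset.mem_coe, hOut, hInn, Finset.mem_filter, Finset.mem_univ, true_and]
    constructor
    · intro h; exact cover h
    · rintro (h | h)
      · exact adjO h
      · exact (adjO h).symm
  have hdisj : Disjoint (Out v₀) (Inn v₀) := by
    rw [Finset.disjoint_left]
    intro w hw hw'
    simp only [hOut, hInn, Finset.mem_filter, Finset.mem_univ, true_and] at hw hw'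
    exact excl hw hw'
  rw [Nat.card_coe_set_eq, hsplit, Set.ncard_coe_finset,
    Finset.card_union_of_disjoint hdisj, hab]
  exact ⟨(Inn v₀).card, by ring⟩

end Aux

section BiCayAux

open SimpleGraph

variable {H : Type*} [CommGroup H]

private lemma biCay_adj (R L S : Set H) (a b : H × Bool) :
    (biCay H R L S).Adj a b ↔ a ≠ b ∧
    ((a.2 = false ∧ b.2 = false ∧ b.1 * a.1⁻¹ ∈ R ∧ a.1 * b.1⁻¹ ∈ R) ∨
     (a.2 = true ∧ b.2 = true ∧ b.1 * a.1⁻¹ ∈ L ∧ a.1 * b.1⁻¹ ∈ L) ∨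
     (a.2 = false ∧ b.2 = true ∧ b.1 * a.1⁻¹ ∈ S) ∨
     (a.2 = true ∧ b.2 = false ∧ a.1 * b.1⁻¹ ∈ S)) := Iff.rfl


private lemma bcIdent2 (e d x y : H) :
    (e * y⁻¹) * (d * x⁻¹)⁻¹ = e * d⁻¹ * (y * x⁻¹)⁻¹ := by
  rw [mul_inv_rev, inv_inv, mul_inv_rev, inv_inv, mul_mul_mul_comm,
    mul_mul_mul_comm e d⁻¹, mul_comm y⁻¹ d⁻¹]

private lemma bcIdent1 (d x y : H) : (d * y⁻¹) * (d * x⁻¹)⁻¹ = (y * x⁻¹)⁻¹ := by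
  rw [bcIdent2, mul_inv_cancel, one_mul]

private lemma bcIdent3 (s x y : H) : (x⁻¹ * s) * (y⁻¹ * s)⁻¹ = y * x⁻¹ := by
  rw [mul_comm x⁻¹ s, mul_comm y⁻¹ s, bcIdent1, mul_inv_rev, inv_inv]

private lemma bcIdent4 (d h : H) : d * (d * h⁻¹)⁻¹ = h := by
  rw [mul_inv_rev, inv_inv, mul_comm h d⁻¹, mul_inv_cancel_left]

private lemma bcIdent5 (s h : H) : (h⁻¹ * s)⁻¹ * s = h := by
  rw [mul_inv_rev, inv_inv, mul_comm s⁻¹ h, inv_mul_cancel_right]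

/-- The "flip" map `(h,0) ↦ (d₀h⁻¹,0)`, `(h,1) ↦ (d₁h⁻¹,1)` as an automorphism. -/
private def biCayFlip (R L S : Set H) (hR : R⁻¹ = R) (hL : L⁻¹ = L) (d₀ d₁ : H)
    (hS : ∀ u : H, u ∈ S ↔ d₁ * d₀⁻¹ * u⁻¹ ∈ S) :
    biCay H R L S ≃g biCay H R L S := by
  refine autOfInvolutive (fun p => ((if p.2 then d₁ else d₀) * p.1⁻¹, p.2)) ?_ ?_
  · rintro ⟨h, b⟩
    cases b
    · show (d₀ * (d₀ * h⁻¹)⁻¹, false) = (h, false)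
      rw [bcIdent4]
    · show (d₁ * (d₁ * h⁻¹)⁻¹, true) = (h, true)
      rw [bcIdent4]
  · rintro ⟨h, i⟩ ⟨k, j⟩ hadj
    rw [biCay_adj] at hadj ⊢
    obtain ⟨hne, hc⟩ := hadj
    constructor
    · intro hcon
      simp only [Prod.mk.injEq] at hcon
      obtain ⟨hc1, hc2⟩ := hcon
      subst hc2
      exact hne (by rw [inv_injective (mul_left_cancel hc1)])
    · have key : ∀ (A : Set H), A⁻¹ = A → ∀ (d x y : H), y * x⁻¹ ∈ A →
          (d * y⁻¹) * (d * x⁻¹)⁻¹ ∈ A := by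
        intro A hA d x y hxy
        have heq : (d * y⁻¹) * (d * x⁻¹)⁻¹ = (y * x⁻¹)⁻¹ := bcIdent1 d x y
        rw [heq, ← Set.mem_inv] at *
        rwa [hA]
      have keyS : ∀ x y : H, y * x⁻¹ ∈ S → (d₁ * y⁻¹) * (d₀ * x⁻¹)⁻¹ ∈ S := by
        intro x y hxy
        have heq : (d₁ * y⁻¹) * (d₀ * x⁻¹)⁻¹ = d₁ * d₀⁻¹ * (y * x⁻¹)⁻¹ := bcIdent2 d₁ d₀ x y
        rw [heq]
        exact (hS _).1 hxy
      rcases hc with ⟨hi, hj, hm1, hm2⟩ | ⟨hi, hj, hm1, hm2⟩ | ⟨hi, hj, hm⟩ | ⟨hi, hj, hm⟩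
      · subst hi; subst hj
        exact Or.inl ⟨rfl, rfl, by simpa using key R hR d₀ h k hm1,
          by simpa using key R hR d₀ k h hm2⟩
      · subst hi; subst hj
        exact Or.inr (Or.inl ⟨rfl, rfl, by simpa using key L hL d₁ h k hm1,
          by simpa using key L hL d₁ k h hm2⟩)
      · subst hi; subst hj
        exact Or.inr (Or.inr (Or.inl ⟨rfl, rfl, by simpa using keyS h k hm⟩))
      · subst hi; subst hj
        exact Or.inr (Or.inr (Or.inr ⟨rfl, rfl, by simpa using keyS k h hm⟩))

/-- The part-swapping map `(h,i) ↦ (h⁻¹s, !i)` as an automorphism when `R = L = ∅`. -/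
private def biCaySwap (S : Set H) (s : H) :
    biCay H (∅ : Set H) (∅ : Set H) S ≃g biCay H (∅ : Set H) (∅ : Set H) S := by
  refine autOfInvolutive (fun p => (p.1⁻¹ * s, !p.2)) ?_ ?_
  · rintro ⟨h, b⟩
    show ((h⁻¹ * s)⁻¹ * s, !!b) = (h, b)
    rw [bcIdent5, Bool.not_not]
  · rintro ⟨h, i⟩ ⟨k, j⟩ hadj
    rw [biCay_adj] at hadj ⊢
    obtain ⟨hne, hc⟩ := hadj
    constructor
    · intro hcon
      simp only [Prod.mk.injEq] at hcon
      obtain ⟨hc1, hc2⟩ := hcon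
      have hhk : h = k := inv_injective (mul_right_cancel hc1)
      exact hne (by rw [hhk, Bool.not_inj hc2])
    · have keyS : ∀ x y : H, y * x⁻¹ ∈ S → (x⁻¹ * s) * (y⁻¹ * s)⁻¹ ∈ S := by
        intro x y hxy
        have heq : (x⁻¹ * s) * (y⁻¹ * s)⁻¹ = y * x⁻¹ := bcIdent3 s x y
        rwa [heq]
      rcases hc with ⟨_, _, hm, _⟩ | ⟨_, _, hm, _⟩ | ⟨hi, hj, hm⟩ | ⟨hi, hj, hm⟩
      · exact absurd hm (Set.notMem_empty _)
      · exact absurd hm (Set.notMem_empty _)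
      · subst hi; subst hj
        exact Or.inr (Or.inr (Or.inr ⟨rfl, rfl, by simpa using keyS h k hm⟩))
      · subst hi; subst hj
        exact Or.inr (Or.inr (Or.inl ⟨rfl, rfl, by simpa using keyS k h hm⟩))

/-- Parity: a finite, inversion-closed set of non-involutions has even cardinality. -/
private lemma even_ncard_of_inv_closed [Finite H] {A : Set H} (hA : A⁻¹ = A)
    (hno : ∀ x ∈ A, x * x ≠ 1) : Even A.ncard := by
  classical
  have hfin : A.Finite := Set.toFinite A
  have hmem : ∀ x ∈ hfin.toFinset, x⁻¹ ∈ hfin.toFinset := by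
    intro x hx
    rw [Set.Finite.mem_toFinset] at *
    rw [← hA, Set.mem_inv, inv_inv]
    exact hx
  have hsum : ∑ _x ∈ hfin.toFinset, (1 : ZMod 2) = 0 := by
    apply Finset.sum_involution (g := fun x _ => x⁻¹)
    · intro a _; decide
    · intro a ha _ hcon
      have ha' : a ∈ A := (Set.Finite.mem_toFinset hfin).1 ha
      refine hno a ha' ?_
      nth_rewrite 2 [← hcon]
      exact mul_inv_cancel a
    · intro a ha; exact inv_inv a
    · intro a ha; exact hmem a ha
  rw [Finset.sum_const, nsmul_eq_mul, mul_one] at hsum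
  obtain ⟨k, hk⟩ := (ZMod.natCast_eq_zero_iff _ 2).1 hsum
  rw [Set.ncard_eq_toFinset_card _ hfin, hk]
  exact ⟨k, by omega⟩

end BiCayAux

section BiCayAux2

open SimpleGraph Pointwise

variable {H : Type*} [CommGroup H]

private lemma biCay_nbhd_false (R L S : Set H) (hR : R⁻¹ = R) (h1R : (1 : H) ∉ R) :
    (biCay H R L S).neighborSet (1, false) =
      (fun r => (r, false)) '' R ∪ (fun z => (z, true)) '' S := by
  ext ⟨k, b⟩
  rw [SimpleGraph.mem_neighborSet, biCay_adj]
  cases b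
  · constructor
    · rintro ⟨hne, hc⟩
      rcases hc with ⟨_, _, hm1, _⟩ | ⟨hi, _, _⟩ | ⟨_, hj, _⟩ | ⟨hi, _, _⟩
      · exact Or.inl ⟨k, by simpa using hm1, rfl⟩
      · exact absurd hi (by simp)
      · exact absurd hj (by simp)
      · exact absurd hi (by simp)
    · rintro (⟨r, hr, heq⟩ | ⟨z, hz, heq⟩)
      · simp only [Prod.mk.injEq] at heq
        obtain ⟨rfl, -⟩ := heq
        refine ⟨?_, Or.inl ⟨rfl, rfl, by simpa using hr, ?_⟩⟩
        · intro hcon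
          simp only [Prod.mk.injEq] at hcon
          rw [← hcon.1] at hr
          exact h1R hr
        · simp only [inv_one, one_mul]
          rw [← hR]
          exact Set.inv_mem_inv.2 hr
      · simp at heq
  · constructor
    · rintro ⟨hne, hc⟩
      rcases hc with ⟨_, hj, _⟩ | ⟨hi, _, _⟩ | ⟨_, _, hm⟩ | ⟨hi, _, _⟩
      · exact absurd hj (by simp)
      · exact absurd hi (by simp)
      · exact Or.inr ⟨k, by simpa using hm, rfl⟩
      · exact absurd hi (by simp)
    · rintro (⟨r, hr, heq⟩ | ⟨z, hz, heq⟩)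
      · simp at heq
      · simp only [Prod.mk.injEq] at heq
        obtain ⟨rfl, -⟩ := heq
        exact ⟨by simp, Or.inr (Or.inr (Or.inl ⟨rfl, rfl, by simpa using hz⟩))⟩

private lemma biCay_nbhd_true (R L S : Set H) (hL : L⁻¹ = L) (h1L : (1 : H) ∉ L) :
    (biCay H R L S).neighborSet (1, true) =
      (fun l => (l, true)) '' L ∪ (fun z => (z, false)) '' (S⁻¹) := by
  ext ⟨k, b⟩
  rw [SimpleGraph.mem_neighborSet, biCay_adj]
  cases b
  · constructor
    · rintro ⟨hne, hc⟩
      rcases hc with ⟨hi, _, _⟩ | ⟨_, hj, _⟩ | ⟨hi, _, _⟩ | ⟨_, _, hm⟩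
      · exact absurd hi (by simp)
      · exact absurd hj (by simp)
      · exact absurd hi (by simp)
      · refine Or.inr ⟨k, ?_, rfl⟩
        rw [Set.mem_inv]
        simpa using hm
    · rintro (⟨r, hr, heq⟩ | ⟨z, hz, heq⟩)
      · simp at heq
      · simp only [Prod.mk.injEq] at heq
        obtain ⟨rfl, -⟩ := heq
        rw [Set.mem_inv] at hz
        exact ⟨by simp, Or.inr (Or.inr (Or.inr ⟨rfl, rfl, by simpa using hz⟩))⟩
  · constructor
    · rintro ⟨hne, hc⟩
      rcases hc with ⟨hi, _, _⟩ | ⟨_, _, hm1, _⟩ | ⟨hi, _, _⟩ | ⟨_, hj, _⟩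
      · exact absurd hi (by simp)
      · exact Or.inl ⟨k, by simpa using hm1, rfl⟩
      · exact absurd hi (by simp)
      · exact absurd hj (by simp)
    · rintro (⟨r, hr, heq⟩ | ⟨z, hz, heq⟩)
      · simp only [Prod.mk.injEq] at heq
        obtain ⟨rfl, -⟩ := heq
        refine ⟨?_, Or.inr (Or.inl ⟨rfl, rfl, by simpa using hr, ?_⟩)⟩
        · intro hcon
          simp only [Prod.mk.injEq] at hcon
          rw [← hcon.1] at hr
          exact h1L hr
        · simp only [inv_one, one_mul]
          rw [← hL]
          exact Set.inv_mem_inv.2 hr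
      · simp at heq

private lemma card_nbhd_false [Finite H] (R L S : Set H) (hR : R⁻¹ = R) (h1R : (1 : H) ∉ R) :
    Nat.card ((biCay H R L S).neighborSet (1, false)) = Nat.card R + Nat.card S := by
  have hinj1 : Function.Injective (fun r : H => (r, false)) := fun a b h => (Prod.ext_iff.1 h).1
  have hinj2 : Function.Injective (fun z : H => (z, true)) := fun a b h => (Prod.ext_iff.1 h).1
  have hdisj : Disjoint ((fun r : H => (r, false)) '' R) ((fun z : H => (z, true)) '' S) := by
    rw [Set.disjoint_left]
    rintro p ⟨r, _, rfl⟩ ⟨z, _, hcon⟩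
    simp at hcon
  rw [Nat.card_coe_set_eq, Nat.card_coe_set_eq, Nat.card_coe_set_eq,
    biCay_nbhd_false R L S hR h1R, Set.ncard_union_eq hdisj (Set.toFinite _) (Set.toFinite _),
    Set.ncard_image_of_injective _ hinj1, Set.ncard_image_of_injective _ hinj2]

private lemma card_nbhd_true [Finite H] (R L S : Set H) (hL : L⁻¹ = L) (h1L : (1 : H) ∉ L) :
    Nat.card ((biCay H R L S).neighborSet (1, true)) = Nat.card L + Nat.card S := by
  have hinj1 : Function.Injective (fun l : H => (l, true)) := fun a b h => (Prod.ext_iff.1 h).1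
  have hinj2 : Function.Injective (fun z : H => (z, false)) := fun a b h => (Prod.ext_iff.1 h).1
  have hdisj : Disjoint ((fun l : H => (l, true)) '' L) ((fun z : H => (z, false)) '' (S⁻¹)) := by
    rw [Set.disjoint_left]
    rintro p ⟨r, _, rfl⟩ ⟨z, _, hcon⟩
    simp at hcon
  rw [Nat.card_coe_set_eq, Nat.card_coe_set_eq, Nat.card_coe_set_eq,
    biCay_nbhd_true R L S hL h1L, Set.ncard_union_eq hdisj (Set.toFinite _) (Set.toFinite _),
    Set.ncard_image_of_injective _ hinj1, Set.ncard_image_of_injective _ hinj2, Set.ncard_inv]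

private lemma biCay_S_nonempty (R L S : Set H)
    (hconn : (biCay H R L S).Connected) : S.Nonempty := by
  by_contra hS
  rw [Set.not_nonempty_iff_eq_empty] at hS
  subst hS
  have hwalk : ∀ {a b : H × Bool}, (biCay H R L ∅).Walk a b → a.2 = b.2 := by
    intro a b p
    induction p with
    | nil => rfl
    | @cons a c b h p ih =>
      rw [biCay_adj] at h
      rcases h.2 with ⟨hi, hj, _⟩ | ⟨hi, hj, _⟩ | ⟨_, _, hm⟩ | ⟨_, _, hm⟩
      · rw [hi, ← hj]; exact ih
      · rw [hi, ← hj]; exact ih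
      · exact absurd hm (Set.notMem_empty _)
      · exact absurd hm (Set.notMem_empty _)
  obtain ⟨p⟩ := hconn.preconnected (1, false) (1, true)
  simpa using hwalk p

private lemma flip_const_exists {S : Set H} (hS1 : S.ncard = 1 ∨ S.ncard = 2) :
    ∃ c : H, ∀ u : H, u ∈ S ↔ c * u⁻¹ ∈ S := by
  have hh : ∀ a b u : H, a * b * u⁻¹ = a ↔ u = b := by
    intro a b u
    constructor
    · intro h
      rw [mul_assoc, mul_eq_left, mul_inv_eq_one] at h
      exact h.symm
    · rintro rfl
      exact mul_inv_cancel_right _ _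
  rcases hS1 with h | h
  · obtain ⟨s, rfl⟩ := Set.ncard_eq_one.1 h
    refine ⟨s * s, fun u => ?_⟩
    simp only [Set.mem_singleton_iff]
    exact (hh s s u).symm
  · obtain ⟨s, t, hst, rfl⟩ := Set.ncard_eq_two.1 h
    refine ⟨s * t, fun u => ?_⟩
    simp only [Set.mem_insert_iff, Set.mem_singleton_iff]
    have e1 : s * t * u⁻¹ = s ↔ u = t := hh s t u
    have e2 : s * t * u⁻¹ = t ↔ u = s := by rw [mul_comm s t]; exact hh t s u
    rw [e1, e2]
    tauto

end BiCayAux2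

/-- If `Γ = BiCay(H,R,L,S)` is a connected half-arc-transitive
bi-Cayley graph over a finite abelian group `H` (vertex- and edge-transitive but not
arc-transitive), then `R ∪ L` is non-empty and contains no involution, `|R| = |L|` is
even, `|S| > 2`, and the valency `|R| + |S|` of `Γ` is at least 6. -/
theorem biCay_abelian_half_arc_transitive
    {H : Type*} [CommGroup H] [Finite H] (R L S : Set H)
    (hR : R⁻¹ = R) (hL : L⁻¹ = L) (h1 : (1 : H) ∉ R ∪ L)
    (hconn : (biCay H R L S).Connected)
    (hVT : ∀ v w : H × Bool, ∃ φ : biCay H R L S ≃g biCay H R L S, φ v = w)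
    (hET : ∀ e₁ ∈ (biCay H R L S).edgeSet, ∀ e₂ ∈ (biCay H R L S).edgeSet,
      ∃ φ : biCay H R L S ≃g biCay H R L S, Sym2.map ⇑φ e₁ = e₂)
    (hnAT : ¬ (∀ a₁ b₁ a₂ b₂ : H × Bool,
      (biCay H R L S).Adj a₁ b₁ → (biCay H R L S).Adj a₂ b₂ →
      ∃ φ : biCay H R L S ≃g biCay H R L S, φ a₁ = a₂ ∧ φ b₁ = b₂)) :
    (R ∪ L).Nonempty ∧ (∀ x ∈ R ∪ L, x * x ≠ 1) ∧
    Nat.card R = Nat.card L ∧ Even (Nat.card R) ∧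
    2 < Nat.card S ∧ 6 ≤ Nat.card R + Nat.card S := by
  classical
  have h1R : (1 : H) ∉ R := fun h => h1 (Or.inl h)
  have h1L : (1 : H) ∉ L := fun h => h1 (Or.inr h)
  -- no automorphism reverses any edge
  have noRev : ∀ (φ : biCay H R L S ≃g biCay H R L S) (u v : H × Bool),
      (biCay H R L S).Adj u v → φ u = v → φ v = u → False := by
    intro φ u v huv e1 e2
    exact hnAT (arcTrans_of_reversal hET φ huv e1 e2)
  -- S is nonempty
  have hSne : S.Nonempty := biCay_S_nonempty R L S hconn
  obtain ⟨s₀, hs₀⟩ := hSne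
  -- no involutions in R ∪ L
  have hnoinv : ∀ x ∈ R ∪ L, x * x ≠ 1 := by
    rintro x (hx | hx) hxx
    · have hxinv : x⁻¹ = x := inv_eq_of_mul_eq_one_right hxx
      have hx1 : x ≠ 1 := fun h => h1R (h ▸ hx)
      set φ := biCayRightMul H R L S x with hφ
      have e1 : φ (1, false) = (x, false) := by
        show ((1 : H) * x⁻¹, false) = (x, false)
        rw [one_mul, hxinv]
      have e2 : φ ((x : H), false) = (1, false) := by
        show (x * x⁻¹, false) = ((1 : H), false)
        rw [mul_inv_cancel]
      have hadj : (biCay H R L S).Adj (1, false) (x, false) := by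
        rw [biCay_adj]
        refine ⟨fun hcon => hx1 ((Prod.ext_iff.1 hcon).1).symm,
          Or.inl ⟨rfl, rfl, by simpa using hx, ?_⟩⟩
        simp only [inv_one, one_mul, inv_inv]
        rw [hxinv]
        exact hx
      exact noRev φ _ _ hadj e1 e2
    · have hxinv : x⁻¹ = x := inv_eq_of_mul_eq_one_right hxx
      have hx1 : x ≠ 1 := fun h => h1L (h ▸ hx)
      set φ := biCayRightMul H R L S x with hφ
      have e1 : φ (1, true) = (x, true) := by
        show ((1 : H) * x⁻¹, true) = (x, true)
        rw [one_mul, hxinv]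
      have e2 : φ ((x : H), true) = (1, true) := by
        show (x * x⁻¹, true) = ((1 : H), true)
        rw [mul_inv_cancel]
      have hadj : (biCay H R L S).Adj (1, true) (x, true) := by
        rw [biCay_adj]
        refine ⟨fun hcon => hx1 ((Prod.ext_iff.1 hcon).1).symm,
          Or.inr (Or.inl ⟨rfl, rfl, by simpa using hx, ?_⟩)⟩
        simp only [inv_one, one_mul, inv_inv]
        rw [hxinv]
        exact hx
      exact noRev φ _ _ hadj e1 e2
  -- R ∪ L is nonempty
  have hRL : (R ∪ L).Nonempty := by
    rw [Set.nonempty_iff_ne_empty]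
    intro hcon
    rw [Set.union_empty_iff] at hcon
    obtain ⟨hR0, hL0⟩ := hcon
    subst hR0; subst hL0
    set φ := biCaySwap S s₀ with hφ
    have e1 : φ (1, false) = (s₀, true) := by
      show ((1 : H)⁻¹ * s₀, true) = (s₀, true)
      rw [inv_one, one_mul]
    have e2 : φ (s₀, true) = (1, false) := by
      show (s₀⁻¹ * s₀, false) = ((1 : H), false)
      rw [inv_mul_cancel]
    have hadj : (biCay H (∅ : Set H) (∅ : Set H) S).Adj (1, false) (s₀, true) := by
      rw [biCay_adj]
      exact ⟨by simp, Or.inr (Or.inr (Or.inl ⟨rfl, rfl, by simpa using hs₀⟩))⟩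
    exact noRev φ _ _ hadj e1 e2
  -- |R| = |L|
  have hcards : Nat.card R = Nat.card L := by
    obtain ⟨φ, hφ⟩ := hVT ((1 : H), false) ((1 : H), true)
    have hcong := Nat.card_congr (φ.mapNeighborSet ((1 : H), false))
    rw [hφ, card_nbhd_false R L S hR h1R, card_nbhd_true R L S hL h1L] at hcong
    omega
  -- |R| is even
  have hevenR : Even (Nat.card R) := by
    rw [Nat.card_coe_set_eq]
    exact even_ncard_of_inv_closed hR (fun x hx => hnoinv x (Or.inl hx))
  -- |S| > 2
  have hS3 : 2 < Nat.card S := by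
    by_contra hcon
    push_neg at hcon
    have hpos : 0 < S.ncard := (Set.ncard_pos (Set.toFinite S)).2 ⟨s₀, hs₀⟩
    rw [Nat.card_coe_set_eq] at hcon
    have h12 : S.ncard = 1 ∨ S.ncard = 2 := by omega
    obtain ⟨c, hc⟩ := flip_const_exists h12
    obtain ⟨z, hz⟩ := hRL
    rcases hz with hzR | hzL
    · have hz1 : z ≠ 1 := fun h => h1R (h ▸ hzR)
      have hSprop : ∀ u : H, u ∈ S ↔ (z * c) * z⁻¹ * u⁻¹ ∈ S := by
        intro u
        have : (z * c) * z⁻¹ = c := by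
          rw [mul_comm z c, mul_inv_cancel_right]
        rw [this]
        exact hc u
      set φ := biCayFlip R L S hR hL z (z * c) hSprop with hφ
      have e1 : φ (1, false) = (z, false) := by
        show (z * (1 : H)⁻¹, false) = (z, false)
        rw [inv_one, mul_one]
      have e2 : φ (z, false) = (1, false) := by
        show (z * z⁻¹, false) = ((1 : H), false)
        rw [mul_inv_cancel]
      have hadj : (biCay H R L S).Adj (1, false) (z, false) := by
        rw [biCay_adj]
        refine ⟨fun hcon2 => hz1 ((Prod.ext_iff.1 hcon2).1).symm,
          Or.inl ⟨rfl, rfl, by simpa using hzR, ?_⟩⟩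
        simp only [inv_one, one_mul]
        rw [← hR]
        exact Set.inv_mem_inv.2 hzR
      exact noRev φ _ _ hadj e1 e2
    · have hz1 : z ≠ 1 := fun h => h1L (h ▸ hzL)
      have hSprop : ∀ u : H, u ∈ S ↔ z * (z * c⁻¹)⁻¹ * u⁻¹ ∈ S := by
        intro u
        have : z * (z * c⁻¹)⁻¹ = c := bcIdent4 z c
        rw [this]
        exact hc u
      set φ := biCayFlip R L S hR hL (z * c⁻¹) z hSprop with hφ
      have e1 : φ (1, true) = (z, true) := by
        show (z * (1 : H)⁻¹, true) = (z, true)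
        rw [inv_one, mul_one]
      have e2 : φ (z, true) = (1, true) := by
        show (z * z⁻¹, true) = ((1 : H), true)
        rw [mul_inv_cancel]
      have hadj : (biCay H R L S).Adj (1, true) (z, true) := by
        rw [biCay_adj]
        refine ⟨fun hcon2 => hz1 ((Prod.ext_iff.1 hcon2).1).symm,
          Or.inr (Or.inl ⟨rfl, rfl, by simpa using hzL, ?_⟩)⟩
        simp only [inv_one, one_mul]
        rw [← hL]
        exact Set.inv_mem_inv.2 hzL
      exact noRev φ _ _ hadj e1 e2
  -- valency at least 6
  have hadj0 : (biCay H R L S).Adj (1, false) (s₀, true) := by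
    rw [biCay_adj]
    exact ⟨by simp, Or.inr (Or.inr (Or.inl ⟨rfl, rfl, by simpa using hs₀⟩))⟩
  have hevenDeg : Even (Nat.card ((biCay H R L S).neighborSet (1, false))) :=
    even_degree_of_halfArcTrans hVT hET hnAT hadj0
  rw [card_nbhd_false R L S hR h1R] at hevenDeg
  have hRpos : 0 < Nat.card R := by
    rcases hRL with ⟨z, hz | hz⟩
    · rw [Nat.card_coe_set_eq]
      exact (Set.ncard_pos (Set.toFinite R)).2 ⟨z, hz⟩
    · rw [hcards, Nat.card_coe_set_eq]
      exact (Set.ncard_pos (Set.toFinite L)).2 ⟨z, hz⟩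
  obtain ⟨k, hk⟩ := hevenDeg
  refine ⟨hRL, hnoinv, hcards, hevenR, hS3, ?_⟩
  obtain ⟨m, hm⟩ := hevenR
  omega
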